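/- arXiv:2501.06616 — 2 statements merged into one kernel-verified Lean document; each statement's English description precedes it below -/
import Mathlib

section
/- For every complex number s with |s| < 1, one has ∏_{n=1}^∞ (1 − s^{2n})(1 + s^{2n−1})² = Σ_{k∈ℤ} s^{k²}, with the product convergent and the series absolutely convergent. -/
open Finset Filter Topology

namespace JTP
def e : ℕ → ℕ
  | 0 => 0
  | k+1 => e k + k

noncomputable def gb (t : ℂ) : ℕ → ℕ → ℂ
  | 0, 0 => 1
  | 0, _+1 => 0
  | _+1, 0 => 1
  | M+1, k+1 => gb t M (k+1) + t ^ (M - k) * gb t M k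

lemma gb_zero (t : ℂ) : ∀ M k, M < k → gb t M k = 0 := by
  intro M
  induction M with
  | zero => intro k hk; match k, hk with
    | k+1, _ => rfl
  | succ M ih =>
    intro k hk
    match k, hk with
    | k+1, hk =>
      show gb t M (k+1) + t ^ (M - k) * gb t M k = 0
      rw [ih (k+1) (by omega), ih k (by omega)]
      ring

lemma gb_diag (t : ℂ) : ∀ M, gb t M M = 1 := by
  intro M
  induction M with
  | zero => rfl
  | succ M ih =>
    show gb t M (M+1) + t ^ (M - M) * gb t M M = 1
    rw [gb_zero t M (M+1) (by omega), ih]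
    simp

lemma gauss (t z : ℂ) : ∀ M, ∏ j ∈ range M, (1 + t ^ j * z)
    = ∑ k ∈ range (M+1), t ^ (e k) * gb t M k * z ^ k := by
  intro M
  induction M with
  | zero => simp [e, gb]
  | succ M ih =>
    have A0 : gb t M 0 = 1 := by cases M <;> rfl
    have B0 : gb t (M+1) 0 = 1 := rfl
    rw [prod_range_succ, ih]
    rw [Finset.sum_range_succ' (fun k => t ^ e k * gb t (M+1) k * z ^ k) (M+1)]
    rw [mul_add, mul_one, Finset.sum_mul]
    have h1 : ∑ k ∈ range (M+1), t ^ e k * gb t M k * z ^ k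
        = ∑ k ∈ range (M+2), t ^ e k * gb t M k * z ^ k := by
      symm
      rw [sum_range_succ, gb_zero t M (M+1) (by omega)]; ring
    rw [h1, Finset.sum_range_succ' (fun k => t ^ e k * gb t M k * z ^ k) (M+1)]
    simp only [B0, A0, e, pow_zero, mul_one, one_mul]
    rw [add_right_comm, add_left_inj, ← Finset.sum_add_distrib]
    apply sum_congr rfl
    intro x hx
    simp only [mem_range] at hx
    symm
    show t ^ (e x + x) * gb t (M+1) (x+1) * z ^ (x+1) = _
    show t ^ (e x + x) * (gb t M (x+1) + t ^ (M - x) * gb t M x) * z ^ (x+1) = _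
    have hcomb : t ^ (e x + x) * t ^ (M - x) = t ^ e x * t ^ M := by
      rw [← pow_add, ← pow_add]; congr 1; omega
    rw [mul_add, add_mul]
    congr 1
    rw [pow_succ]
    calc t ^ (e x + x) * (t ^ (M - x) * gb t M x) * (z ^ x * z)
        = (t ^ (e x + x) * t ^ (M - x)) * gb t M x * (z ^ x * z) := by ring
      _ = (t ^ e x * t ^ M) * gb t M x * (z ^ x * z) := by rw [hcomb]
      _ = _ := by ring

/-- partial products of `∏ (1 - t^(j+1))` -/
noncomputable def f (t : ℂ) (n : ℕ) : ℂ := ∏ j ∈ range n, (1 - t ^ (j+1))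

lemma f_succ (t : ℂ) (n : ℕ) : f t (n+1) = f t n * (1 - t ^ (n+1)) := prod_range_succ _ _

lemma gb_mul_f (t : ℂ) : ∀ M k, k ≤ M → gb t M k * f t k * f t (M - k) = f t M := by
  intro M
  induction M with
  | zero => intro k hk; interval_cases k; simp [gb, f]
  | succ M ih =>
    intro k hk
    match k with
    | 0 => simp only [gb, f, range_zero, prod_empty, one_mul, Nat.sub_zero]
    | j+1 =>
      show (gb t M (j+1) + t ^ (M - j) * gb t M j) * f t (j+1) * f t (M+1-(j+1)) = f t (M+1)
      rcases Nat.lt_or_ge j M with hj | hj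
      · have e2 : M - (j+1) + 1 = M - j := by omega
        have h2 : f t (M+1-(j+1)) = f t (M - (j+1)) * (1 - t ^ (M - j)) := by
          rw [show M + 1 - (j+1) = (M - (j+1)) + 1 by omega, f_succ, e2]
        have h3 : f t (j+1) = f t j * (1 - t ^ (j+1)) := f_succ t j
        have key1 : gb t M (j+1) * f t (j+1) * f t (M - (j+1)) = f t M := ih (j+1) (by omega)
        have key2 : gb t M j * f t j * f t (M - j) = f t M := ih j (by omega)
        have h5 : f t (M - j) = f t (M - (j+1)) * (1 - t ^ (M - j)) := by
          rw [show M - j = (M - (j+1)) + 1 by omega, f_succ, e2]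
        have h6 : t ^ (M - j) * t ^ (j+1) = t ^ (M+1) := by
          rw [← pow_add]; congr 1; omega
        rw [f_succ t M]
        calc (gb t M (j+1) + t ^ (M - j) * gb t M j) * f t (j+1) * f t (M+1-(j+1))
            = gb t M (j+1) * f t (j+1) * f t (M-(j+1)) * (1 - t ^ (M-j))
              + t ^ (M-j) * (gb t M j * (f t j * (1 - t^(j+1))) * (f t (M-(j+1)) * (1 - t^(M-j)))) := by
              rw [h2, h3]; ring
          _ = f t M * (1 - t ^ (M-j))
              + t ^ (M-j) * (1 - t^(j+1)) * (gb t M j * f t j * f t (M-j)) := by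
              rw [key1, h5]; ring
          _ = f t M * (1 - t ^ (M-j)) + t ^ (M-j) * (1 - t^(j+1)) * f t M := by rw [key2]
          _ = f t M * (1 - (t ^ (M-j) * t^(j+1))) := by ring
          _ = f t M * (1 - t ^ (M+1)) := by rw [h6]
      · -- j ≥ M, so j = M (since j+1 ≤ M+1)
        have hjM : j = M := by omega
        subst hjM
        rw [gb_zero t j (j+1) (by omega), gb_diag, Nat.sub_self, Nat.sub_self]
        show (0 + t ^ 0 * 1) * f t (j+1) * f t 0 = f t (j+1)
        simp [f]


section
variable {t : ℂ}

lemma one_sub_pow_ne (ht : ‖t‖ < 1) (j : ℕ) : (1 : ℂ) - t ^ (j+1) ≠ 0 := by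
  intro h
  rw [sub_eq_zero] at h
  have h2 : ‖t ^ (j+1)‖ < 1 := by
    rw [norm_pow]; exact pow_lt_one₀ (norm_nonneg t) ht (by omega)
  rw [← h] at h2; simp at h2

lemma f_ne (ht : ‖t‖ < 1) (n : ℕ) : f t n ≠ 0 := by
  rw [f, Finset.prod_ne_zero_iff]
  exact fun j _ => one_sub_pow_ne ht j

lemma gb_symm (ht : ‖t‖ < 1) {M k : ℕ} (hk : k ≤ M) : gb t M k = gb t M (M - k) := by
  have h1 := gb_mul_f t M k hk
  have h2 := gb_mul_f t M (M - k) (by omega)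
  rw [show M - (M - k) = k by omega] at h2
  apply mul_right_cancel₀ (b := f t k * f t (M - k))
    (mul_ne_zero (f_ne ht k) (f_ne ht (M - k)))
  calc gb t M k * (f t k * f t (M-k)) = gb t M k * f t k * f t (M-k) := by ring
    _ = f t M := h1
    _ = gb t M (M-k) * f t (M-k) * f t k := h2.symm
    _ = gb t M (M-k) * (f t k * f t (M-k)) := by ring

/-- tail product `∏_{j=a}^{a+b-1} (1 - t^(j+1))` -/
noncomputable def T (t : ℂ) (a b : ℕ) : ℂ := ∏ j ∈ range b, (1 - t ^ (a+j+1))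

lemma f_add (t : ℂ) (a b : ℕ) : f t (a+b) = f t a * T t a b := by
  rw [f, f, T, prod_range_add]

lemma gb_f_eq (ht : ‖t‖ < 1) (N m : ℕ) (hm : m ≤ N) :
    gb t (2*N) (N+m) * f t N = T t (N+m) (N-m) * T t (N-m) m := by
  have hc : (f t (N+m)) * (f t (N-m)) ≠ 0 := mul_ne_zero (f_ne ht _) (f_ne ht _)
  apply mul_right_cancel₀ hc
  have key : gb t (2*N) (N+m) * f t (N+m) * f t (N-m) = f t (2*N) := by
    have := gb_mul_f t (2*N) (N+m) (by omega)
    rwa [show 2*N - (N+m) = N - m by omega] at this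
  calc gb t (2*N) (N+m) * f t N * (f t (N+m) * f t (N-m))
      = (gb t (2*N) (N+m) * f t (N+m) * f t (N-m)) * f t N := by ring
    _ = f t (2*N) * f t N := by rw [key]
    _ = (f t (N+m) * T t (N+m) (N-m)) * (f t (N-m) * T t (N-m) m) := by
        rw [← f_add, ← f_add, show N+m+(N-m) = 2*N by omega, show N-m+m = N by omega]
    _ = T t (N+m) (N-m) * T t (N-m) m * (f t (N+m) * f t (N-m)) := by ring

end

lemma sum_odds (N : ℕ) : ∑ i ∈ range N, (2*i+1) = N^2 := by
  induction N with
  | zero => simp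
  | succ N ih => rw [sum_range_succ, ih]; ring

lemma e_cast : ∀ k : ℕ, (2 * e k : ℤ) = k * (k - 1) := by
  intro k
  induction k with
  | zero => simp [e]
  | succ k ih =>
    have : e (k+1) = e k + k := rfl
    rw [this]
    push_cast
    push_cast at ih
    linarith [ih]

lemma FI (s : ℂ) (hs0 : s ≠ 0) (N : ℕ) :
    ∏ i ∈ range N, (1 + s^(2*i+1))^2
    = ∑ k ∈ range (2*N+1), s^(((k:ℤ) - N)^2) * gb (s^2) (2*N) k := by
  have key := gauss (s^2) (s^((1:ℤ) - 2*N)) (2*N)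
  -- rewrite factors of the product as zpow of s
  have hfac : ∀ j : ℕ, (1 : ℂ) + (s^2)^j * s^((1:ℤ) - 2*N) = 1 + s^(2*(j:ℤ)+1-2*N) := by
    intro j
    congr 1
    rw [← pow_mul, ← zpow_natCast s (2*j), ← zpow_add₀ hs0]
    congr 1
    push_cast; ring
  rw [prod_congr rfl (fun j _ => hfac j)] at key
  -- multiply both sides by s^(N^2)
  have main : s^(N^2) * ∏ j ∈ range (2*N), (1 + s^(2*(j:ℤ)+1-2*N))
      = s^(N^2) * ∑ k ∈ range (2*N+1), (s^2)^(e k) * gb (s^2) (2*N) k * (s^((1:ℤ)-2*N))^k := by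
    rw [key]
  -- LHS of main
  have hL : s^(N^2) * ∏ j ∈ range (2*N), (1 + s^(2*(j:ℤ)+1-2*N))
      = ∏ i ∈ range N, (1 + s^(2*i+1))^2 := by
    rw [show 2*N = N + N by ring, prod_range_add]
    have hB : ∀ i ∈ range N, (1:ℂ) + s^(2*((N+i:ℕ):ℤ)+1-2*N) = 1 + s^(2*i+1) := by
      intro i _
      congr 1
      rw [show 2*((N+i:ℕ):ℤ)+1-2*N = ((2*i+1 : ℕ) : ℤ) by push_cast; ring, zpow_natCast]
    rw [prod_congr rfl hB]
    have hrefl := prod_range_reflect (fun j => (1:ℂ) + s^(2*((j:ℕ):ℤ)+1-2*N)) N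
    rw [← hrefl]
    have hA : ∀ i ∈ range N, (1:ℂ) + s^(2*((N-1-i:ℕ):ℤ)+1-2*N) = 1 + s^(-(2*(i:ℤ)+1)) := by
      intro i hi
      simp only [mem_range] at hi
      congr 1
      congr 1
      omega
    rw [prod_congr rfl hA, ← sum_odds N, ← prod_pow_eq_pow_sum, ← prod_mul_distrib,
      ← prod_mul_distrib]
    apply prod_congr rfl
    intro i _
    have h0 : s^(2*i+1) * (1 + s^(-(2*(i:ℤ)+1))) = s^(2*i+1) + 1 := by
      rw [mul_add, mul_one, ← zpow_natCast s (2*i+1), ← zpow_add₀ hs0,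
        show ((2*i+1 : ℕ):ℤ) + -(2*(i:ℤ)+1) = 0 by push_cast; ring, zpow_zero]
    calc s^(2*i+1) * ((1 + s^(-(2*(i:ℤ)+1))) * (1 + s^(2*i+1)))
        = (s^(2*i+1) * (1 + s^(-(2*(i:ℤ)+1)))) * (1 + s^(2*i+1)) := by ring
      _ = (s^(2*i+1) + 1) * (1 + s^(2*i+1)) := by rw [h0]
      _ = (1 + s^(2*i+1))^2 := by ring
  -- RHS of main
  have hR : s^(N^2) * ∑ k ∈ range (2*N+1), (s^2)^(e k) * gb (s^2) (2*N) k * (s^((1:ℤ)-2*N))^k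
      = ∑ k ∈ range (2*N+1), s^(((k:ℤ) - N)^2) * gb (s^2) (2*N) k := by
    rw [mul_sum]
    apply sum_congr rfl
    intro k _
    have h1 : ((s:ℂ)^2)^(e k) = s^((2 * e k : ℕ)) := by rw [← pow_mul]
    have h2 : (s^((1:ℤ)-2*N))^k = s^(((1:ℤ)-2*N) * k) := by
      rw [← zpow_natCast (s^((1:ℤ)-2*N)) k, ← zpow_mul]
    rw [h1, h2, ← zpow_natCast s (2 * e k), ← zpow_natCast s (N^2)]
    have hexp : ((N^2 : ℕ) : ℤ) + ((2 * e k : ℕ) : ℤ) + ((1:ℤ)-2*N) * k = ((k:ℤ) - N)^2 := by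
      have := e_cast k
      push_cast
      push_cast at this
      nlinarith [this]
    calc s ^ ((N^2 : ℕ) : ℤ) * (s ^ ((2 * e k : ℕ) : ℤ) * gb (s^2) (2*N) k * s ^ (((1:ℤ)-2*N) * k))
        = (s ^ ((N^2 : ℕ) : ℤ) * s ^ ((2 * e k : ℕ) : ℤ) * s ^ (((1:ℤ)-2*N) * k)) * gb (s^2) (2*N) k := by
          ring
      _ = s ^ (((N^2 : ℕ) : ℤ) + ((2 * e k : ℕ) : ℤ) + ((1:ℤ)-2*N) * k) * gb (s^2) (2*N) k := by
          rw [← zpow_add₀ hs0, ← zpow_add₀ hs0]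
      _ = s^(((k:ℤ) - N)^2) * gb (s^2) (2*N) k := by rw [hexp]
  rw [← hL, main, hR]

lemma PN (s : ℂ) (hs0 : s ≠ 0) (N : ℕ) :
    ∏ i ∈ range N, ((1 - s^(2*i+2)) * (1 + s^(2*i+1))^2)
    = ∑ k ∈ range (2*N+1), s^(((k:ℤ) - N)^2) * (gb (s^2) (2*N) k * f (s^2) N) := by
  rw [prod_mul_distrib]
  have h1 : ∏ i ∈ range N, ((1:ℂ) - s^(2*i+2)) = f (s^2) N := by
    apply prod_congr rfl
    intro i _
    rw [show 2*i+2 = 2*(i+1) by ring, pow_mul]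
  rw [h1, FI s hs0 N, mul_comm, sum_mul]
  apply sum_congr rfl
  intro k _
  ring

lemma norm_prod_one_add_sub_one_le {ι : Type*} (F : Finset ι) (g : ι → ℂ) :
    ‖(∏ j ∈ F, (1 + g j)) - 1‖ ≤ (∏ j ∈ F, (1 + ‖g j‖)) - 1 := by
  induction F using Finset.cons_induction with
  | empty => simp
  | cons a F ha ih =>
    rw [prod_cons, prod_cons]
    have h1 : (1 + g a) * ∏ j ∈ F, (1 + g j) - 1
        = (1 + g a) * ((∏ j ∈ F, (1 + g j)) - 1) + g a := by ring
    have h2 : (0:ℝ) ≤ (∏ j ∈ F, (1 + ‖g j‖)) - 1 := by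
      have : (1:ℝ) ≤ ∏ j ∈ F, (1 + ‖g j‖) := by
        calc (1:ℝ) = ∏ j ∈ F, 1 := by simp
          _ ≤ ∏ j ∈ F, (1 + ‖g j‖) := Finset.prod_le_prod (by intros; norm_num)
              (by intro j _; linarith [norm_nonneg (g j)])
      linarith
    calc ‖(1 + g a) * ∏ j ∈ F, (1 + g j) - 1‖
        ≤ ‖(1 + g a)‖ * ‖(∏ j ∈ F, (1 + g j)) - 1‖ + ‖g a‖ := by
          rw [h1]; exact (norm_add_le _ _).trans (by rw [norm_mul])
      _ ≤ (1 + ‖g a‖) * ((∏ j ∈ F, (1 + ‖g j‖)) - 1) + ‖g a‖ := by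
          apply add_le_add_left
          apply mul_le_mul _ ih (norm_nonneg _) (by positivity)
          exact (norm_add_le _ _).trans (by simp)
      _ = (1 + ‖g a‖) * (∏ j ∈ F, (1 + ‖g j‖)) - 1 := by ring

lemma prod_one_add_le_exp {ι : Type*} (F : Finset ι) (c : ι → ℝ) (hc : ∀ j, 0 ≤ c j) :
    ∏ j ∈ F, (1 + c j) ≤ Real.exp (∑ j ∈ F, c j) := by
  rw [Real.exp_sum]
  apply Finset.prod_le_prod
  · intro j _; linarith [hc j]
  · intro j _; linarith [Real.add_one_le_exp (c j)]

section
variable {t : ℂ}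

lemma sum_tail_le (ht : ‖t‖ < 1) (a b : ℕ) :
    ∑ j ∈ range b, ‖t‖^(a+j+1) ≤ ‖t‖^(a+1) * (1 - ‖t‖)⁻¹ := by
  have h1 : ∀ j ∈ range b, ‖t‖^(a+j+1) = ‖t‖^(a+1) * ‖t‖^j := by
    intro j _; rw [← pow_add]; congr 1; omega
  rw [sum_congr rfl h1, ← mul_sum]
  apply mul_le_mul_of_nonneg_left _ (by positivity)
  calc ∑ j ∈ range b, ‖t‖^j ≤ ∑' j : ℕ, ‖t‖^j :=
        Summable.sum_le_tsum _ (fun j _ => by positivity) (summable_geometric_of_lt_one (norm_nonneg t) ht)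
    _ = (1 - ‖t‖)⁻¹ := tsum_geometric_of_lt_one (norm_nonneg t) ht

lemma T_eq (a b : ℕ) : T t a b = ∏ j ∈ range b, (1 + (-(t^(a+j+1)))) := by
  apply prod_congr rfl; intro j _; ring

lemma norm_T_sub_one (ht : ‖t‖ < 1) (a b : ℕ) :
    ‖T t a b - 1‖ ≤ Real.exp (‖t‖^(a+1) * (1 - ‖t‖)⁻¹) - 1 := by
  rw [T_eq]
  calc ‖(∏ j ∈ range b, (1 + (-(t^(a+j+1))))) - 1‖
      ≤ (∏ j ∈ range b, (1 + ‖-(t^(a+j+1))‖)) - 1 := norm_prod_one_add_sub_one_le _ _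
    _ ≤ Real.exp (∑ j ∈ range b, ‖-(t^(a+j+1))‖) - 1 := by
        have := prod_one_add_le_exp (range b) (fun j => ‖-(t^(a+j+1))‖) (fun j => norm_nonneg _)
        linarith
    _ ≤ Real.exp (‖t‖^(a+1) * (1 - ‖t‖)⁻¹) - 1 := by
        have h2 : ∑ j ∈ range b, ‖-(t^(a+j+1))‖ = ∑ j ∈ range b, ‖t‖^(a+j+1) := by
          apply sum_congr rfl; intro j _; rw [norm_neg, norm_pow]
        rw [h2]
        have := sum_tail_le (t := t) ht a b
        have := Real.exp_le_exp.2 this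
        linarith

lemma norm_T_le (ht : ‖t‖ < 1) (a b : ℕ) : ‖T t a b‖ ≤ Real.exp ((1 - ‖t‖)⁻¹) := by
  have h1 := norm_T_sub_one ht a b
  have h2 : ‖T t a b‖ ≤ ‖T t a b - 1‖ + 1 := by
    calc ‖T t a b‖ = ‖T t a b - 1 + 1‖ := by ring_nf
      _ ≤ ‖T t a b - 1‖ + ‖(1:ℂ)‖ := norm_add_le _ _
      _ = ‖T t a b - 1‖ + 1 := by simp
  have h3 : ‖t‖^(a+1) * (1 - ‖t‖)⁻¹ ≤ (1 - ‖t‖)⁻¹ := by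
    have h4 : ‖t‖^(a+1) ≤ 1 := pow_le_one₀ (norm_nonneg t) ht.le
    have h5 : (0:ℝ) ≤ (1 - ‖t‖)⁻¹ := by
      apply inv_nonneg.2; linarith
    nlinarith
  have := Real.exp_le_exp.2 h3
  linarith

lemma tendsto_T (ht : ‖t‖ < 1) (A B : ℕ → ℕ) (hA : Tendsto A atTop atTop) :
    Tendsto (fun N => T t (A N) (B N)) atTop (𝓝 1) := by
  have hA1 : Tendsto (fun N => A N + 1) atTop atTop :=
    tendsto_atTop_mono (fun N => Nat.le_add_right (A N) 1) hA
  have h1 : Tendsto (fun N => ‖t‖^(A N + 1)) atTop (𝓝 (0:ℝ)) :=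
    (tendsto_pow_atTop_nhds_zero_of_lt_one (norm_nonneg t) ht).comp hA1
  have h2 : Continuous (fun x : ℝ => Real.exp (x * (1 - ‖t‖)⁻¹) - 1) :=
    (Real.continuous_exp.comp (continuous_id.mul continuous_const)).sub continuous_const
  have hb : Tendsto (fun N => Real.exp (‖t‖^(A N + 1) * (1 - ‖t‖)⁻¹) - 1) atTop (𝓝 0) := by
    have h3 := (h2.tendsto 0).comp h1
    simpa [Function.comp_def] using h3
  have hnorm : Tendsto (fun N => ‖T t (A N) (B N) - 1‖) atTop (𝓝 0) :=
    squeeze_zero (fun N => norm_nonneg _) (fun N => norm_T_sub_one ht (A N) (B N)) hb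
  have key : Tendsto (fun N => T t (A N) (B N) - 1) atTop (𝓝 (0:ℂ)) :=
    tendsto_zero_iff_norm_tendsto_zero.mpr hnorm
  have := key.add_const 1
  simpa using this

end

end JTP



open JTP Finset Filter Topology in
/-- Specialization `t = 1` of the Jacobi triple product identity:
`∏_{n≥1} (1 - s^{2n})(1 + s^{2n-1})² = ∑_{k∈ℤ} s^{k²}` for `|s| < 1`,
with the product convergent and the series absolutely convergent. -/
theorem jacobi_triple_product_t_eq_one (s : ℂ) (hs : ‖s‖ < 1) :
    Multipliable (fun n : ℕ => (1 - s ^ (2 * n + 2)) * (1 + s ^ (2 * n + 1)) ^ 2) ∧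
    Summable (fun k : ℤ => ‖s ^ (k ^ 2)‖) ∧
    (∏' n : ℕ, (1 - s ^ (2 * n + 2)) * (1 + s ^ (2 * n + 1)) ^ 2) =
      ∑' k : ℤ, s ^ (k ^ 2) := by
  have hs2 : ‖s^2‖ < 1 := by
    rw [norm_pow]; exact pow_lt_one₀ (norm_nonneg s) hs (by omega)
  -- Summability
  have hsum_geom : Summable (fun k : ℤ => ‖s‖ ^ k.natAbs) := by
    apply Summable.of_nat_of_neg <;>
      simpa using summable_geometric_of_lt_one (norm_nonneg s) hs
  have hzpow_eq : ∀ k : ℤ, s ^ (k^2) = s ^ (k.natAbs^2) := by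
    intro k
    rw [← zpow_natCast s (k.natAbs^2)]
    congr 1
    push_cast
    exact (sq_abs k).symm
  have hSummable : Summable (fun k : ℤ => ‖s ^ (k^2)‖) := by
    apply Summable.of_nonneg_of_le (fun k => norm_nonneg _) _ hsum_geom
    intro k
    rw [hzpow_eq k, norm_pow]
    exact pow_le_pow_of_le_one (norm_nonneg s) hs.le (Nat.le_self_pow (by omega) _)
  -- Multipliability
  have mult_aux : ∀ c : ℕ → ℂ, (∀ n, ‖c n‖ ≤ ‖s‖^(n+1)) → Multipliable (fun n => 1 + c n) := by
    intro c hc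
    have hlt : ∀ n, ‖c n‖ < 1 := by
      intro n
      refine lt_of_le_of_lt (hc n) (lt_of_le_of_lt ?_ hs)
      calc ‖s‖^(n+1) ≤ ‖s‖^1 := pow_le_pow_of_le_one (norm_nonneg s) hs.le (by omega)
        _ = ‖s‖ := pow_one _
    have hne : ∀ n, (1:ℂ) + c n ≠ 0 := by
      intro n h
      have : ‖c n‖ = 1 := by
        have : c n = -1 := by linear_combination h
        rw [this]; simp
      linarith [hlt n]
    have hlog : Summable (fun n => Complex.log (1 + c n)) := by
      apply Summable.of_norm_bounded_eventually_nat (g := fun n => 3/2 * ‖s‖^n)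
        ((summable_geometric_of_lt_one (norm_nonneg s) hs).mul_left _)
      have hev : ∀ᶠ n in atTop, ‖s‖^n < 1/2 :=
        (tendsto_pow_atTop_nhds_zero_of_lt_one (norm_nonneg s) hs).eventually_lt_const
          (by norm_num)
      filter_upwards [hev] with n hn
      have h1 : ‖c n‖ ≤ 1/2 := by
        refine le_trans (hc n) (le_trans ?_ hn.le)
        exact pow_le_pow_of_le_one (norm_nonneg s) hs.le (by omega)
      calc ‖Complex.log (1 + c n)‖ ≤ 3/2 * ‖c n‖ :=
            Complex.norm_log_one_add_half_le_self h1
        _ ≤ 3/2 * ‖s‖^n := by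
            have h2 : ‖c n‖ ≤ ‖s‖^n := le_trans (hc n)
              (pow_le_pow_of_le_one (norm_nonneg s) hs.le (by omega))
            linarith
    exact Complex.multipliable_of_summable_log hlog
  have hM1 : Multipliable (fun n : ℕ => 1 - s^(2*n+2)) := by
    have := mult_aux (fun n => -s^(2*n+2)) (by
      intro n
      rw [norm_neg, norm_pow]
      exact pow_le_pow_of_le_one (norm_nonneg s) hs.le (by omega))
    apply this.congr
    intro n; ring
  have hM2 : Multipliable (fun n : ℕ => 1 + s^(2*n+1)) :=
    mult_aux (fun n => s^(2*n+1)) (by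
      intro n
      rw [norm_pow]
      exact pow_le_pow_of_le_one (norm_nonneg s) hs.le (by omega))
  have hMult : Multipliable (fun n : ℕ => (1 - s^(2*n+2)) * (1 + s^(2*n+1))^2) := by
    apply (hM1.mul (hM2.mul hM2)).congr
    intro n; ring
  refine ⟨hMult, hSummable, ?_⟩
  rcases eq_or_ne s 0 with rfl | hs0
  · -- s = 0
    have hf : ∀ n : ℕ, (1 - (0:ℂ)^(2*n+2)) * (1 + (0:ℂ)^(2*n+1))^2 = 1 := by
      intro n
      rw [zero_pow (by omega), zero_pow (by omega)]
      ring
    rw [tprod_congr hf, tprod_one]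
    have hg : ∀ k : ℤ, (0:ℂ)^(k^2) = if k = 0 then 1 else 0 := by
      intro k
      rcases eq_or_ne k 0 with rfl | hk
      · simp
      · rw [if_neg hk, zero_zpow _ (pow_ne_zero 2 hk)]
    rw [tsum_congr hg, tsum_ite_eq]
  · -- main case
    set g : ℕ → ℤ → ℂ := fun N m => if m.natAbs ≤ N then
      s^(m^2) * (T (s^2) (N + m.natAbs) (N - m.natAbs) * T (s^2) (N - m.natAbs) m.natAbs)
      else 0 with hg_def
    have stepA : ∀ N, ∏ i ∈ range N, ((1 - s^(2*i+2)) * (1 + s^(2*i+1))^2) = ∑' m : ℤ, g N m := by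
      intro N
      rw [PN s hs0 N]
      rw [tsum_eq_sum (s := Finset.Icc (-(N:ℤ)) N) (f := g N) (by
        intro m hm
        rw [Finset.mem_Icc] at hm
        rw [hg_def]
        simp only
        rw [if_neg (by omega)])]
      refine Finset.sum_nbij' (fun k => (k:ℤ) - N) (fun m => (m + N).toNat) ?_ ?_ ?_ ?_ ?_
      · intro k hk
        beta_reduce
        simp only [mem_range] at hk
        rw [Finset.mem_Icc]
        omega
      · intro m hm
        beta_reduce
        rw [Finset.mem_Icc] at hm
        simp only [mem_range]
        omega
      · intro k hk
        beta_reduce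
        simp only [mem_range] at hk
        omega
      · intro m hm
        beta_reduce
        rw [Finset.mem_Icc] at hm
        omega
      · intro k hk
        beta_reduce
        simp only [mem_range] at hk
        rw [hg_def]
        simp only
        have ha : ((k:ℤ) - N).natAbs ≤ N := by omega
        rw [if_pos ha]
        congr 1
        set a := ((k:ℤ) - N).natAbs with ha_def
        have key := gb_f_eq hs2 N a ha
        rw [← key]
        have hgb : gb (s^2) (2*N) k = gb (s^2) (2*N) (N + a) := by
          rcases le_or_gt N k with h | h
          · congr 1; omega
          · have h1 : gb (s^2) (2*N) k = gb (s^2) (2*N) (2*N - k) :=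
              gb_symm hs2 (by omega)
            rw [h1]
            congr 1; omega
        rw [hgb]
    have stepB : Tendsto (fun N => ∑' m : ℤ, g N m) atTop (𝓝 (∑' m : ℤ, s^(m^2))) := by
      apply tendsto_tsum_of_dominated_convergence
        (bound := fun m : ℤ => (Real.exp ((1-‖s^2‖)⁻¹))^2 * ‖s‖^(m.natAbs))
      · exact hsum_geom.mul_left _
      · intro m
        set a := m.natAbs
        have hT1 : Tendsto (fun N => T (s^2) (N + a) (N - a)) atTop (𝓝 1) :=
          tendsto_T hs2 (fun N => N + a) (fun N => N - a)
            (tendsto_atTop_mono (fun N => Nat.le_add_right N a) tendsto_id)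
        have hT2 : Tendsto (fun N => T (s^2) (N - a) a) atTop (𝓝 1) :=
          tendsto_T hs2 (fun N => N - a) (fun _ => a) (tendsto_sub_atTop_nat a)
        have h1 : Tendsto (fun N => s^(m^2) * (T (s^2) (N + a) (N - a) * T (s^2) (N - a) a))
            atTop (𝓝 (s^(m^2) * (1 * 1))) :=
          tendsto_const_nhds.mul (hT1.mul hT2)
        rw [mul_one, mul_one] at h1
        apply h1.congr'
        filter_upwards [eventually_ge_atTop a] with N hN
        rw [hg_def]
        simp only
        rw [if_pos hN]
      · apply Filter.Eventually.of_forall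
        intro N m
        rw [hg_def]
        simp only
        by_cases hc : m.natAbs ≤ N
        · rw [if_pos hc]
          rw [norm_mul, norm_mul]
          have hE : (0:ℝ) ≤ Real.exp ((1-‖s^2‖)⁻¹) := Real.exp_nonneg _
          have h1 : ‖s^(m^2)‖ ≤ ‖s‖^(m.natAbs) := by
            rw [hzpow_eq m, norm_pow]
            exact pow_le_pow_of_le_one (norm_nonneg s) hs.le (Nat.le_self_pow (by omega) _)
          have h2 := norm_T_le hs2 (N + m.natAbs) (N - m.natAbs)
          have h3 := norm_T_le hs2 (N - m.natAbs) m.natAbs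
          calc ‖s^(m^2)‖ * (‖T (s^2) (N + m.natAbs) (N - m.natAbs)‖ * ‖T (s^2) (N - m.natAbs) m.natAbs‖)
              ≤ ‖s‖^(m.natAbs) * (Real.exp ((1-‖s^2‖)⁻¹) * Real.exp ((1-‖s^2‖)⁻¹)) := by
                apply mul_le_mul h1 _ (by positivity) (by positivity)
                exact mul_le_mul h2 h3 (norm_nonneg _) hE
            _ = (Real.exp ((1-‖s^2‖)⁻¹))^2 * ‖s‖^(m.natAbs) := by ring
        · rw [if_neg hc]
          simp only [norm_zero]
          positivity
    have stepC : Tendsto (fun N => ∏ i ∈ range N, ((1 - s^(2*i+2)) * (1 + s^(2*i+1))^2))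
        atTop (𝓝 (∏' n : ℕ, (1 - s^(2*n+2)) * (1 + s^(2*n+1))^2)) :=
      hMult.hasProd.tendsto_prod_nat
    have stepB' : Tendsto (fun N => ∏ i ∈ range N, ((1 - s^(2*i+2)) * (1 + s^(2*i+1))^2))
        atTop (𝓝 (∑' m : ℤ, s^(m^2))) := by
      rw [funext stepA]
      exact stepB
    exact tendsto_nhds_unique stepC stepB'
end

section
/- For every complex number s with |s| < 1, one has ∏_{n=1}^∞ (1 − s^{2n})(1 − s^{2n−1})² = Σ_{k∈ℤ} (−1)^k s^{k²}, with the product convergent and the series absolutely convergent. -/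
open Finset Filter Topology

namespace JTP

/-- `A s m = ∏_{j=1}^m (1 - (s²)^j)`. -/
noncomputable def A (s : ℂ) (m : ℕ) : ℂ := ∏ j ∈ Finset.range m, (1 - s ^ (2 * j + 2))

/-- Gaussian binomial `[m choose k]_{s²}`, as a complex number. -/
noncomputable def B (s : ℂ) (m k : ℕ) : ℂ := A s m / (A s k * A s (m - k))

variable {s : ℂ} (hs : ‖s‖ < 1)

lemma one_sub_pow_ne_s2 (hs : ‖s‖ < 1) (m : ℕ) : (1 : ℂ) - s ^ (m + 1) ≠ 0 := by
  have h : ‖s ^ (m + 1)‖ < 1 := by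
    rw [norm_pow]
    calc ‖s‖ ^ (m + 1) ≤ ‖s‖ ^ 1 := by
          apply pow_le_pow_of_le_one (norm_nonneg s) hs.le
          omega
      _ < 1 := by simpa using hs
  intro h0
  rw [sub_eq_zero] at h0
  rw [← h0] at h
  simp at h

lemma A_ne (hs : ‖s‖ < 1) (m : ℕ) : A s m ≠ 0 := by
  apply Finset.prod_ne_zero_iff.mpr
  intro j _
  have := one_sub_pow_ne_s2 hs (2 * j + 1)
  convert this using 3

lemma A_succ (m : ℕ) : A s (m + 1) = A s m * (1 - s ^ (2 * m + 2)) :=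
  Finset.prod_range_succ _ _

lemma A_zero : A s 0 = 1 := by simp [A]

lemma B_zero (hs : ‖s‖ < 1) (m : ℕ) : B s m 0 = 1 := by
  rw [B, A_zero, one_mul, Nat.sub_zero, div_self (A_ne hs m)]

lemma B_self (hs : ‖s‖ < 1) (m : ℕ) : B s m m = 1 := by
  rw [B, Nat.sub_self, A_zero, mul_one, div_self (A_ne hs m)]

lemma pascal (hs : ‖s‖ < 1) (j k : ℕ) :
    B s (j + k + 2) (k + 1) = B s (j + k + 1) (k + 1) + (s ^ 2) ^ (j + 1) * B s (j + k + 1) k := by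
  have h1 : j + k + 2 - (k + 1) = j + 1 := by omega
  have h2 : j + k + 1 - (k + 1) = j := by omega
  have h3 : j + k + 1 - k = j + 1 := by omega
  rw [B, B, B, h1, h2, h3]
  rw [show j + k + 2 = (j + k + 1) + 1 from rfl, A_succ, A_succ (m := k), A_succ (m := j)]
  have hak := A_ne hs k
  have haj := A_ne hs j
  have ham := A_ne hs (j + k + 1)
  have h4 := one_sub_pow_ne_s2 hs (2 * k + 1)
  have h5 := one_sub_pow_ne_s2 hs (2 * j + 1)
  have e4 : (1 : ℂ) - s ^ (2 * k + 2) ≠ 0 := by convert h4 using 3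
  have e5 : (1 : ℂ) - s ^ (2 * j + 2) ≠ 0 := by convert h5 using 3
  field_simp
  ring

lemma gauss_s2 (hs : ‖s‖ < 1) (x : ℂ) (m : ℕ) :
    ∏ j ∈ Finset.range m, (1 + x * s ^ (2 * j + 1)) =
      ∑ k ∈ Finset.range (m + 1), B s m k * s ^ (k ^ 2) * x ^ k := by
  induction m with
  | zero => simp [B_self hs 0]
  | succ m ih =>
    rw [Finset.prod_range_succ, ih, mul_add, mul_one, Finset.sum_mul]
    rw [Finset.sum_range_succ' (fun k => B s m k * s ^ (k ^ 2) * x ^ k) m]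
    rw [Finset.sum_range_succ (fun k => B s m k * s ^ (k ^ 2) * x ^ k * (x * s ^ (2 * m + 1))) m]
    rw [Finset.sum_range_succ' (fun k => B s (m + 1) k * s ^ (k ^ 2) * x ^ k) (m + 1)]
    rw [Finset.sum_range_succ (fun i => B s (m + 1) (i + 1) * s ^ ((i + 1) ^ 2) * x ^ (i + 1)) m]
    have h0 : B s (m + 1) 0 = B s m 0 := by rw [B_zero hs, B_zero hs]
    have htop : B s (m + 1) (m + 1) * s ^ ((m + 1) ^ 2) * x ^ (m + 1)
        = B s m m * s ^ (m ^ 2) * x ^ m * (x * s ^ (2 * m + 1)) := by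
      rw [B_self hs, B_self hs]; ring
    have hmid : ∀ i ∈ Finset.range m,
        B s (m + 1) (i + 1) * s ^ ((i + 1) ^ 2) * x ^ (i + 1)
        = B s m (i + 1) * s ^ ((i + 1) ^ 2) * x ^ (i + 1)
          + B s m i * s ^ (i ^ 2) * x ^ i * (x * s ^ (2 * m + 1)) := by
      intro i hi
      obtain ⟨j, hj⟩ := Nat.exists_eq_add_of_lt (Finset.mem_range.mp hi)
      subst hj
      have hp := pascal hs j i
      rw [show i + j + 1 + 1 = j + i + 2 by ring, show i + j + 1 = j + i + 1 by ring, hp]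
      ring
    rw [Finset.sum_congr rfl hmid, Finset.sum_add_distrib, h0, htop]
    ring

lemma sum_odd (N : ℕ) : ∑ i ∈ Finset.range N, (2 * i + 1) = N ^ 2 := by
  induction N with
  | zero => simp
  | succ n ih => rw [Finset.sum_range_succ, ih]; ring

lemma finite_jtp (hs : ‖s‖ < 1) (hs0 : s ≠ 0) (N : ℕ) :
    (∏ i ∈ Finset.range N, (1 - s ^ (2 * i + 1))) ^ 2
      = ∑ k ∈ Finset.range (2 * N + 1),
          (-1 : ℂ) ^ (k + N) * B s (2 * N) k * s ^ (((k : ℤ) - N) ^ 2) := by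
  have hpow : ∀ m : ℕ, s ^ m ≠ 0 := fun m => pow_ne_zero m hs0
  have hg := gauss_s2 hs (-(s ^ (2 * N))⁻¹) (2 * N)
  -- compute the product side
  have hblock2 : ∀ i ∈ Finset.range N,
      (1 + (-(s ^ (2 * N))⁻¹) * s ^ (2 * (N + i) + 1)) = 1 - s ^ (2 * i + 1) := by
    intro i _
    have he : s ^ (2 * (N + i) + 1) = s ^ (2 * N) * s ^ (2 * i + 1) := by
      rw [← pow_add]; congr 1; omega
    rw [he]
    field_simp
    ring
  have hblock1 : ∀ j ∈ Finset.range N,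
      (1 + (-(s ^ (2 * N))⁻¹) * s ^ (2 * j + 1))
        = (1 - s ^ (2 * (N - 1 - j) + 1)) * (-(s ^ (2 * (N - 1 - j) + 1))⁻¹) := by
    intro j hj
    have hjN := Finset.mem_range.mp hj
    have he : s ^ (2 * N) = s ^ (2 * j + 1) * s ^ (2 * (N - 1 - j) + 1) := by
      rw [← pow_add]; congr 1; omega
    rw [he]
    field_simp
    ring
  have hprod : ∏ j ∈ Finset.range (2 * N), (1 + (-(s ^ (2 * N))⁻¹) * s ^ (2 * j + 1))
      = ((∏ i ∈ Finset.range N, (1 - s ^ (2 * i + 1))) ^ 2) * ((-1 : ℂ) ^ N * (s ^ (N ^ 2))⁻¹) := by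
    have hsplit := Finset.prod_range_add
      (fun j => (1 + (-(s ^ (2 * N))⁻¹) * s ^ (2 * j + 1))) N N
    rw [show N + N = 2 * N by ring] at hsplit
    rw [hsplit]
    rw [Finset.prod_congr rfl hblock1, Finset.prod_congr rfl hblock2]
    rw [Finset.prod_mul_distrib]
    rw [Finset.prod_range_reflect (fun i => (1 : ℂ) - s ^ (2 * i + 1)) N]
    rw [Finset.prod_range_reflect (fun i => -(s ^ (2 * i + 1))⁻¹) N]
    have h1 : ∏ i ∈ Finset.range N, -(s ^ (2 * i + 1))⁻¹
        = (-1 : ℂ) ^ N * (s ^ (N ^ 2))⁻¹ := by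
      have : ∀ i ∈ Finset.range N, -(s ^ (2 * i + 1))⁻¹ = (-1 : ℂ) * (s ^ (2 * i + 1))⁻¹ := by
        intro i _; ring
      rw [Finset.prod_congr rfl this, Finset.prod_mul_distrib, Finset.prod_const,
        Finset.card_range, Finset.prod_inv_distrib, Finset.prod_pow_eq_pow_sum, sum_odd]
    rw [h1]
    ring
  rw [hprod] at hg
  -- now multiply through by (-1)^N * s^(N^2)
  have hmul : ((-1 : ℂ) ^ N * s ^ (N ^ 2)) * ((((∏ i ∈ Finset.range N, (1 - s ^ (2 * i + 1))) ^ 2)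
      * ((-1 : ℂ) ^ N * (s ^ (N ^ 2))⁻¹)))
      = (∏ i ∈ Finset.range N, (1 - s ^ (2 * i + 1))) ^ 2 := by
    have h4 : ((-1 : ℂ) ^ N) * ((-1 : ℂ) ^ N) = 1 := by
      rw [← pow_add, ← two_mul, pow_mul]; norm_num
    have h5 : ((-1 : ℂ) ^ N * s ^ (N ^ 2)) * ((((∏ i ∈ Finset.range N, (1 - s ^ (2 * i + 1))) ^ 2)
        * ((-1 : ℂ) ^ N * (s ^ (N ^ 2))⁻¹)))
        = ((∏ i ∈ Finset.range N, (1 - s ^ (2 * i + 1))) ^ 2)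
          * (((-1 : ℂ) ^ N * (-1 : ℂ) ^ N) * (s ^ (N ^ 2) * (s ^ (N ^ 2))⁻¹)) := by ring
    rw [h5, h4, mul_inv_cancel₀ (hpow (N ^ 2))]
    simp
  rw [← hmul, hg, Finset.mul_sum]
  refine Finset.sum_congr rfl fun k hk => ?_
  have hz : s ^ (((k : ℤ) - N) ^ 2) = s ^ (k ^ 2) * s ^ (N ^ 2) * (s ^ (2 * N * k))⁻¹ := by
    have he : ((k : ℤ) - N) ^ 2 = ((k ^ 2 + N ^ 2 : ℕ) : ℤ) - ((2 * N * k : ℕ) : ℤ) := by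
      push_cast; ring
    rw [he, zpow_sub₀ hs0, zpow_natCast, zpow_natCast, pow_add, div_eq_mul_inv]
  have hx : (-(s ^ (2 * N))⁻¹) ^ k = (-1 : ℂ) ^ k * (s ^ (2 * N * k))⁻¹ := by
    rw [neg_pow, inv_pow, ← pow_mul]
  rw [hz, hx, pow_add]
  field_simp

lemma neg_one_pow_congr {a b : ℕ} (h : a % 2 = b % 2) : ((-1 : ℂ)) ^ a = (-1) ^ b := by
  rcases Nat.even_or_odd a with ha | ha
  · have hb : Even b := by rw [Nat.even_iff] at *; omega
    rw [ha.neg_one_pow, hb.neg_one_pow]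
  · have hb : Odd b := by rw [Nat.odd_iff] at *; omega
    rw [ha.neg_one_pow, hb.neg_one_pow]

lemma neg_one_zpow_natAbs (k : ℤ) : ((-1 : ℂ)) ^ k = (-1) ^ k.natAbs := by
  rcases Int.natAbs_eq k with h | h
  · conv_lhs => rw [h]
    rw [zpow_natCast]
  · conv_lhs => rw [h]
    rw [zpow_neg, zpow_natCast]
    rcases Nat.even_or_odd k.natAbs with he | ho
    · rw [he.neg_one_pow]; norm_num
    · rw [ho.neg_one_pow]; norm_num

lemma summable_pow_comp (hs : ‖s‖ < 1) (c : ℕ → ℕ) (hc : ∀ n, n ≤ c n) :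
    Summable (fun n : ℕ => s ^ (c n)) := by
  apply Summable.of_norm_bounded
    (summable_geometric_of_lt_one (norm_nonneg s) hs)
  intro n
  rw [norm_pow]
  exact pow_le_pow_of_le_one (norm_nonneg s) hs.le (hc n)

lemma mult_aux (u : ℕ → ℂ) (hu : Summable u) (hne : ∀ n, 1 + u n ≠ 0) :
    Multipliable (fun n => 1 + u n) := by
  have h0 : Filter.Tendsto u Filter.atTop (𝓝 0) := hu.tendsto_atTop_zero
  have h1 : ∀ᶠ n in Filter.atTop, ‖u n‖ < 1 / 2 := by
    have := h0.norm
    simp only [norm_zero] at this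
    exact this.eventually_lt_const (by norm_num)
  have hlog : Summable (fun n => Complex.log (1 + u n)) := by
    apply Summable.of_norm_bounded_eventually_nat
      (hu.norm.mul_left (3 / 2))
    filter_upwards [h1] with n hn
    exact Complex.norm_log_one_add_half_le_self hn.le
  exact Complex.multipliable_of_summable_log hlog

lemma mult_even (hs : ‖s‖ < 1) : Multipliable (fun n : ℕ => 1 - s ^ (2 * n + 2)) := by
  have heq : (fun n : ℕ => 1 - s ^ (2 * n + 2)) = (fun n => 1 + (-(s ^ (2 * n + 2)))) := by
    funext n; ring
  rw [heq]
  exact mult_aux _ (Summable.neg (summable_pow_comp hs _ (fun n => by omega)))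
    (fun n => by
      rw [← sub_eq_add_neg]
      have := one_sub_pow_ne_s2 hs (2 * n + 1)
      convert this using 3)

lemma mult_odd (hs : ‖s‖ < 1) : Multipliable (fun n : ℕ => 1 - s ^ (2 * n + 1)) := by
  have heq : (fun n : ℕ => 1 - s ^ (2 * n + 1)) = (fun n => 1 + (-(s ^ (2 * n + 1)))) := by
    funext n; ring
  rw [heq]
  exact mult_aux _ (Summable.neg (summable_pow_comp hs _ (fun n => by omega)))
    (fun n => by
      rw [← sub_eq_add_neg]
      exact one_sub_pow_ne_s2 hs (2 * n))

lemma weier (f : ℕ → ℝ) (h0 : ∀ i, 0 ≤ f i) (h1 : ∀ i, f i ≤ 1) (F : Finset ℕ) :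
    1 - ∑ i ∈ F, f i ≤ ∏ i ∈ F, (1 - f i) := by
  classical
  induction F using Finset.induction_on with
  | empty => simp
  | @insert a F ha ih =>
    rw [Finset.sum_insert ha, Finset.prod_insert ha]
    have hP0 : (0 : ℝ) ≤ ∏ i ∈ F, (1 - f i) :=
      Finset.prod_nonneg (fun i _ => by linarith [h1 i])
    have hS0 : (0 : ℝ) ≤ ∑ i ∈ F, f i := Finset.sum_nonneg (fun i _ => h0 i)
    nlinarith [ih, h0 a, h1 a]

lemma real_lower (hs : ‖s‖ < 1) :
    ∃ c : ℝ, 0 < c ∧ ∀ m, c ≤ ∏ j ∈ Finset.range m, (1 - ‖s‖ ^ (2 * j + 2)) := by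
  set r := ‖s‖ with hr
  have hr0 : 0 ≤ r := norm_nonneg s
  have hfac0 : ∀ j : ℕ, 0 < 1 - r ^ (2 * j + 2) := by
    intro j
    have : r ^ (2 * j + 2) < 1 := pow_lt_one₀ hr0 hs (by omega)
    linarith
  have hfacle : ∀ j : ℕ, 1 - r ^ (2 * j + 2) ≤ 1 := by
    intro j
    have : 0 ≤ r ^ (2 * j + 2) := by positivity
    linarith
  -- choose M with r ^ M * (1 - r)⁻¹ ≤ 1 / 2
  obtain ⟨M, hM⟩ : ∃ M : ℕ, r ^ M * (1 - r)⁻¹ ≤ 1 / 2 := by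
    have ht : Filter.Tendsto (fun M : ℕ => r ^ M * (1 - r)⁻¹) Filter.atTop (𝓝 0) := by
      simpa using (tendsto_pow_atTop_nhds_zero_of_lt_one hr0 hs).mul_const (1 - r)⁻¹
    exact (ht.eventually_le_const (by norm_num : (0:ℝ) < 1/2)).exists
  have hsum : ∀ m, M ≤ m → ∑ j ∈ Finset.Ico M m, r ^ (2 * j + 2) ≤ 1 / 2 := by
    intro m hm
    have h1 : ∑ j ∈ Finset.Ico M m, r ^ (2 * j + 2) ≤ ∑ j ∈ Finset.Ico M m, r ^ j := by
      apply Finset.sum_le_sum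
      intro j _
      exact pow_le_pow_of_le_one hr0 hs.le (by omega)
    have h2 : ∑ j ∈ Finset.Ico M m, r ^ j = r ^ M * ∑ i ∈ Finset.range (m - M), r ^ i := by
      rw [Finset.sum_Ico_eq_sum_range, Finset.mul_sum]
      exact Finset.sum_congr rfl fun i _ => by rw [pow_add]
    have h3 : ∑ i ∈ Finset.range (m - M), r ^ i ≤ (1 - r)⁻¹ := by
      have := Summable.sum_le_tsum (Finset.range (m - M)) (fun i _ => by positivity)
        (summable_geometric_of_lt_one hr0 hs)
      rwa [tsum_geometric_of_lt_one hr0 hs] at this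
    calc ∑ j ∈ Finset.Ico M m, r ^ (2 * j + 2) ≤ r ^ M * ∑ i ∈ Finset.range (m - M), r ^ i := by
          rw [← h2]; exact h1
      _ ≤ r ^ M * (1 - r)⁻¹ := by
          apply mul_le_mul_of_nonneg_left h3 (by positivity)
      _ ≤ 1 / 2 := hM
  set p := ∏ j ∈ Finset.range M, (1 - r ^ (2 * j + 2)) with hp
  have hp0 : 0 < p := Finset.prod_pos (fun j _ => hfac0 j)
  refine ⟨p * (1 / 2), by positivity, fun m => ?_⟩
  rcases le_or_gt m M with h | h
  · have hmono : p ≤ ∏ j ∈ Finset.range m, (1 - r ^ (2 * j + 2)) := by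
      rw [hp, ← Finset.prod_range_mul_prod_Ico _ h]
      have hIco1 : ∏ j ∈ Finset.Ico m M, (1 - r ^ (2 * j + 2)) ≤ 1 :=
        Finset.prod_le_one (fun j _ => (hfac0 j).le) (fun j _ => hfacle j)
      have hpm0 : 0 < ∏ j ∈ Finset.range m, (1 - r ^ (2 * j + 2)) :=
        Finset.prod_pos (fun j _ => hfac0 j)
      nlinarith [hpm0, hIco1, Finset.prod_pos (fun j (_ : j ∈ Finset.Ico m M) => hfac0 j)]
    nlinarith [hp0]
  · rw [← Finset.prod_range_mul_prod_Ico _ h.le, ← hp]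
    have hge : (1 : ℝ) - ∑ j ∈ Finset.Ico M m, r ^ (2 * j + 2)
        ≤ ∏ j ∈ Finset.Ico M m, (1 - r ^ (2 * j + 2)) :=
      weier _ (fun j => by positivity) (fun j => by linarith [hfac0 j]) _
    have h12 : (1 : ℝ) / 2 ≤ ∏ j ∈ Finset.Ico M m, (1 - r ^ (2 * j + 2)) := by
      have := hsum m h.le
      linarith
    nlinarith [hp0]

lemma A_norm_lower (hs : ‖s‖ < 1) (m : ℕ) :
    (∏ j ∈ Finset.range m, (1 - ‖s‖ ^ (2 * j + 2))) ≤ ‖A s m‖ := by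
  rw [A, norm_prod]
  apply Finset.prod_le_prod
  · intro j _
    have : ‖s‖ ^ (2 * j + 2) < 1 := pow_lt_one₀ (norm_nonneg s) hs (by omega)
    linarith
  · intro j _
    calc 1 - ‖s‖ ^ (2 * j + 2) = ‖(1 : ℂ)‖ - ‖s ^ (2 * j + 2)‖ := by
          rw [norm_one, norm_pow]
      _ ≤ ‖1 - s ^ (2 * j + 2)‖ := norm_sub_norm_le _ _

lemma A_norm_upper (hs : ‖s‖ < 1) (m : ℕ) : ‖A s m‖ ≤ Real.exp ((1 - ‖s‖)⁻¹) := by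
  rw [A, norm_prod]
  have h1 : ∀ j ∈ Finset.range m, ‖(1 : ℂ) - s ^ (2 * j + 2)‖ ≤ Real.exp (‖s‖ ^ (2 * j + 2)) := by
    intro j _
    calc ‖(1 : ℂ) - s ^ (2 * j + 2)‖ ≤ ‖(1 : ℂ)‖ + ‖s ^ (2 * j + 2)‖ := norm_sub_le _ _
      _ = 1 + ‖s‖ ^ (2 * j + 2) := by rw [norm_one, norm_pow]
      _ ≤ Real.exp (‖s‖ ^ (2 * j + 2)) := by
          have := Real.add_one_le_exp (‖s‖ ^ (2 * j + 2))
          linarith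
  calc ∏ j ∈ Finset.range m, ‖(1 : ℂ) - s ^ (2 * j + 2)‖
      ≤ ∏ j ∈ Finset.range m, Real.exp (‖s‖ ^ (2 * j + 2)) :=
        Finset.prod_le_prod (fun j _ => norm_nonneg _) h1
    _ = Real.exp (∑ j ∈ Finset.range m, ‖s‖ ^ (2 * j + 2)) := (Real.exp_sum _ _).symm
    _ ≤ Real.exp ((1 - ‖s‖)⁻¹) := by
        apply Real.exp_le_exp.mpr
        calc ∑ j ∈ Finset.range m, ‖s‖ ^ (2 * j + 2) ≤ ∑ j ∈ Finset.range m, ‖s‖ ^ j :=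
              Finset.sum_le_sum (fun j _ =>
                pow_le_pow_of_le_one (norm_nonneg s) hs.le (by omega))
          _ ≤ (1 - ‖s‖)⁻¹ := by
              have := Summable.sum_le_tsum (Finset.range m) (fun i _ => by positivity)
                (summable_geometric_of_lt_one (norm_nonneg s) hs)
              rwa [tsum_geometric_of_lt_one (norm_nonneg s) hs] at this

lemma norm_zpow_sq_le (hs : ‖s‖ < 1) (k : ℤ) : ‖s ^ (k ^ 2)‖ ≤ ‖s‖ ^ k.natAbs := by
  have hsq : (k ^ 2 : ℤ) = ((k.natAbs ^ 2 : ℕ) : ℤ) := by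
    rw [Nat.cast_pow, Int.natAbs_sq]
  rw [norm_zpow, hsq, zpow_natCast]
  exact pow_le_pow_of_le_one (norm_nonneg s) hs.le (Nat.le_self_pow two_ne_zero _)

lemma summable_geo_int (hs : ‖s‖ < 1) : Summable (fun k : ℤ => ‖s‖ ^ k.natAbs) := by
  apply Summable.of_nat_of_neg
  · simpa using summable_geometric_of_lt_one (norm_nonneg s) hs
  · simpa using summable_geometric_of_lt_one (norm_nonneg s) hs

end JTP

open JTP Finset Filter Topology in
/-- Specialization `t = -1` of the Jacobi triple product identity:
`∏_{n≥1} (1 - s^{2n})(1 - s^{2n-1})² = ∑_{k∈ℤ} (-1)^k s^{k²}` for `|s| < 1`,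
with the product convergent and the series absolutely convergent. -/
theorem jacobi_triple_product_t_eq_neg_one (s : ℂ) (hs : ‖s‖ < 1) :
    Multipliable (fun n : ℕ => (1 - s ^ (2 * n + 2)) * (1 - s ^ (2 * n + 1)) ^ 2) ∧
    Summable (fun k : ℤ => ‖(-1 : ℂ) ^ k * s ^ (k ^ 2)‖) ∧
    (∏' n : ℕ, (1 - s ^ (2 * n + 2)) * (1 - s ^ (2 * n + 1)) ^ 2) =
      ∑' k : ℤ, (-1 : ℂ) ^ k * s ^ (k ^ 2) := by
  have hPM := mult_even hs
  have hModd := mult_odd hs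
  have hsqM : Multipliable (fun n : ℕ => (1 - s ^ (2 * n + 1)) ^ 2) := by
    have : (fun n : ℕ => (1 - s ^ (2 * n + 1)) ^ 2)
        = fun n => (1 - s ^ (2 * n + 1)) * (1 - s ^ (2 * n + 1)) := funext fun n => sq _
    rw [this]; exact hModd.mul hModd
  have hLnorm : ∀ k : ℤ, ‖(-1 : ℂ) ^ k * s ^ (k ^ 2)‖ ≤ ‖s‖ ^ k.natAbs := by
    intro k
    rw [norm_mul, norm_zpow, norm_neg, norm_one, one_zpow, one_mul]
    exact norm_zpow_sq_le hs k
  refine ⟨hPM.mul hsqM, ?_, ?_⟩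
  · exact Summable.of_nonneg_of_le (fun k => norm_nonneg _) hLnorm (summable_geo_int hs)
  rcases eq_or_ne s 0 with rfl | hs0
  · -- trivial case s = 0
    have hL : (fun n : ℕ => ((1 : ℂ) - 0 ^ (2 * n + 2)) * (1 - 0 ^ (2 * n + 1)) ^ 2)
        = fun _ => 1 := by
      funext n
      rw [zero_pow (by omega), zero_pow (by omega)]
      norm_num
    rw [hL, tprod_one]
    rw [tsum_eq_single (0 : ℤ) (fun k hk => by
      rw [zero_zpow _ (pow_ne_zero 2 hk), mul_zero])]
    norm_num
  -- main case
  obtain ⟨c, hc0, hc⟩ := real_lower hs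
  set C := Real.exp ((1 - ‖s‖)⁻¹) with hC
  have hC0 : 0 < C := Real.exp_pos _
  have hlow : ∀ m, c ≤ ‖A s m‖ := fun m => (hc m).trans (A_norm_lower hs m)
  have hup : ∀ m, ‖A s m‖ ≤ C := A_norm_upper hs
  set P := ∏' n : ℕ, (1 - s ^ (2 * n + 2)) with hP
  have hPt : Tendsto (fun m => A s m) atTop (𝓝 P) := hPM.hasProd.tendsto_prod_nat
  have hPnorm : c ≤ ‖P‖ := ge_of_tendsto' hPt.norm hlow
  have hPne : P ≠ 0 := by
    intro h
    rw [h, norm_zero] at hPnorm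
    linarith
  set Q := ∏' n : ℕ, (1 - s ^ (2 * n + 1)) with hQ
  have hQt : Tendsto (fun N => ∏ i ∈ Finset.range N, (1 - s ^ (2 * i + 1))) atTop (𝓝 Q) :=
    hModd.hasProd.tendsto_prod_nat
  have hcomp : ∀ u : ℕ → ℕ, Tendsto u atTop atTop →
      Tendsto (fun N => A s (u N)) atTop (𝓝 P) := fun u hu => hPt.comp hu
  have hBk : ∀ k : ℤ, Tendsto (fun N : ℕ => B s (2 * N) ((k + (N : ℤ)).toNat)) atTop
      (𝓝 (P / (P * P))) := by
    intro k
    have hu1 : Tendsto (fun N : ℕ => ((k + (N : ℤ)).toNat)) atTop atTop := by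
      rw [tendsto_atTop_atTop]
      intro b
      exact ⟨b + k.natAbs, fun a ha => by omega⟩
    have hu2 : Tendsto (fun N : ℕ => 2 * N - ((k + (N : ℤ)).toNat)) atTop atTop := by
      rw [tendsto_atTop_atTop]
      intro b
      exact ⟨b + k.natAbs, fun a ha => by omega⟩
    have h2N : Tendsto (fun N : ℕ => 2 * N) atTop atTop := by
      rw [tendsto_atTop_atTop]
      intro b
      exact ⟨b, fun a ha => by omega⟩
    exact Tendsto.div (hcomp _ h2N) ((hcomp _ hu1).mul (hcomp _ hu2))
      (mul_ne_zero hPne hPne)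
  set L : ℤ → ℂ := fun k => (-1 : ℂ) ^ k * s ^ (k ^ 2) with hLdef
  set f : ℕ → ℤ → ℂ := fun N k =>
    if k.natAbs ≤ N then (-1 : ℂ) ^ k * B s (2 * N) ((k + (N : ℤ)).toNat) * s ^ (k ^ 2)
    else 0 with hf
  have hfin : ∀ N, ∑' k : ℤ, f N k = (∏ i ∈ Finset.range N, (1 - s ^ (2 * i + 1))) ^ 2 := by
    intro N
    rw [finite_jtp hs hs0 N]
    rw [tsum_eq_sum (s := Finset.Icc (-(N : ℤ)) N) (fun k hk => by
      rw [Finset.mem_Icc] at hk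
      exact if_neg (by omega))]
    refine Finset.sum_nbij' (i := fun k => ((k + (N : ℤ)).toNat))
      (j := fun m => (m : ℤ) - N) ?_ ?_ ?_ ?_ ?_
    · intro k hk
      rw [Finset.mem_Icc] at hk
      rw [Finset.mem_range]
      omega
    · intro m hm
      rw [Finset.mem_range] at hm
      rw [Finset.mem_Icc]
      omega
    · intro k hk
      rw [Finset.mem_Icc] at hk
      omega
    · intro m hm
      rw [Finset.mem_range] at hm
      omega
    · intro k hk
      rw [Finset.mem_Icc] at hk
      rw [hf]
      simp only
      rw [if_pos (by omega)]
      have he1 : (((k + (N : ℤ)).toNat : ℤ)) - (N : ℤ) = k := by omega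
      rw [he1]
      have hsign : ((-1 : ℂ)) ^ k = (-1 : ℂ) ^ ((k + (N : ℤ)).toNat + N) := by
        rw [neg_one_zpow_natAbs]
        exact neg_one_pow_congr (by omega)
      rw [hsign]
  have hbnd : ∀ N (k : ℤ), ‖f N k‖ ≤ (C / (c * c)) * ‖s‖ ^ k.natAbs := by
    intro N k
    rw [hf]
    simp only
    by_cases hk : k.natAbs ≤ N
    · rw [if_pos hk]
      have hB : ‖B s (2 * N) ((k + (N : ℤ)).toNat)‖ ≤ C / (c * c) := by
        rw [B, norm_div, norm_mul]
        exact div_le_div₀ hC0.le (hup _) (by positivity)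
          (mul_le_mul (hlow _) (hlow _) hc0.le (norm_nonneg _))
      calc ‖(-1 : ℂ) ^ k * B s (2 * N) ((k + (N : ℤ)).toNat) * s ^ (k ^ 2)‖
          = ‖B s (2 * N) ((k + (N : ℤ)).toNat)‖ * ‖s ^ (k ^ 2)‖ := by
            rw [norm_mul, norm_mul, norm_zpow, norm_neg, norm_one, one_zpow, one_mul]
        _ ≤ (C / (c * c)) * ‖s‖ ^ k.natAbs :=
            mul_le_mul hB (norm_zpow_sq_le hs k) (norm_nonneg _) (by positivity)
    · rw [if_neg hk, norm_zero]
      positivity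
  have hgeoZ : Summable (fun k : ℤ => (C / (c * c)) * ‖s‖ ^ k.natAbs) :=
    (summable_geo_int hs).mul_left _
  have hpt : ∀ k : ℤ, Tendsto (fun N => f N k) atTop (𝓝 (L k * (P / (P * P)))) := by
    intro k
    have hev : ∀ᶠ N in atTop,
        (-1 : ℂ) ^ k * B s (2 * N) ((k + (N : ℤ)).toNat) * s ^ (k ^ 2) = f N k := by
      rw [eventually_atTop]
      exact ⟨k.natAbs, fun N hN => (if_pos hN).symm⟩
    have ht := (((hBk k).const_mul ((-1 : ℂ) ^ k)).mul_const (s ^ (k ^ 2)))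
    have he2 : L k * (P / (P * P)) = (-1 : ℂ) ^ k * (P / (P * P)) * s ^ (k ^ 2) := by
      rw [hLdef]; ring
    rw [he2]
    exact Tendsto.congr' hev ht
  have hT := tendsto_tsum_of_dominated_convergence hgeoZ hpt
    (Filter.Eventually.of_forall (fun N => hbnd N))
  have hT2 : Tendsto (fun N => ∑' k, f N k) atTop (𝓝 (Q ^ 2)) := by
    have heq : (fun N => ∑' k, f N k)
        = fun N => (∏ i ∈ Finset.range N, (1 - s ^ (2 * i + 1))) ^ 2 := funext hfin
    rw [heq]
    exact hQt.pow 2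
  have hkey : Q ^ 2 = ∑' k, L k * (P / (P * P)) := tendsto_nhds_unique hT2 hT
  have hPP : P / (P * P) = P⁻¹ := by field_simp
  rw [hPP, tsum_mul_right] at hkey
  have hS : ∑' k : ℤ, L k = Q ^ 2 * P := by
    rw [hkey]
    field_simp
  have hprodeq : (∏' n : ℕ, (1 - s ^ (2 * n + 2)) * (1 - s ^ (2 * n + 1)) ^ 2)
      = P * Q ^ 2 := by
    rw [Multipliable.tprod_mul hPM hsqM, ← hP]
    congr 1
    have : (fun n : ℕ => (1 - s ^ (2 * n + 1)) ^ 2)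
        = fun n => (1 - s ^ (2 * n + 1)) * (1 - s ^ (2 * n + 1)) := funext fun n => sq _
    rw [this, Multipliable.tprod_mul hModd hModd, ← hQ, sq]
  rw [hprodeq]
  have : ∑' k : ℤ, (-1 : ℂ) ^ k * s ^ (k ^ 2) = ∑' k : ℤ, L k := by rw [hLdef]
  rw [this, hS]
  ring
end
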